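/- Let W = (Fin 4 → ℂ) × (Fin 4 → ℂ) and let Λ be the exterior algebra of W over ℂ, with canonical inclusion ι : W → Λ. For i : Fin 4 write uᵢ = ι(eᵢ, 0) and vᵢ = ι(0, eᵢ), where eᵢ is the i-th standard basis vector of Fin 4 → ℂ. Then the element u₀ ∧ u₁ ∧ v₂ ∧ v₃ of Λ does not lie in the ℚ-linear span of the set of all elements of the form (Σᵢ aᵢ uᵢ) ∧ (Σᵢ aᵢ vᵢ) ∧ (Σⱼ bⱼ uⱼ) ∧ (Σⱼ bⱼ vⱼ), where a, b range over all real coefficient vectors a, b : Fin 4 → ℝ. -/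

import Mathlib

set_option maxRecDepth 4000
noncomputable section MixedAux

abbrev Wsp : Type := (Fin 4 → ℂ) × (Fin 4 → ℂ)

def g1 : Wsp →ₗ[ℂ] (Fin 4 → ℂ) where
  toFun x := ![x.1 0, x.1 1, x.2 2, x.2 3]
  map_add' x y := by funext i; fin_cases i <;> simp
  map_smul' c x := by funext i; fin_cases i <;> simp

def g2 : Wsp →ₗ[ℂ] (Fin 4 → ℂ) where
  toFun x := ![x.1 2, x.1 3, x.2 0, x.2 1]
  map_add' x y := by funext i; fin_cases i <;> simp
  map_smul' c x := by funext i; fin_cases i <;> simp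

def A12 : Wsp [⋀^Fin 4]→ₗ[ℂ] ℂ :=
  (Matrix.detRowAlternating.compLinearMap g1) - (Matrix.detRowAlternating.compLinearMap g2)

theorem A12_apply (w : Fin 4 → Wsp) :
    A12 w = Matrix.det (Matrix.of fun i => g1 (w i)) -
      Matrix.det (Matrix.of fun i => g2 (w i)) := rfl

def Ffam : ∀ i : ℕ, Wsp [⋀^Fin i]→ₗ[ℂ] ℂ := Function.update (fun _ => 0) 4 A12

def Fmap : ExteriorAlgebra ℂ Wsp →ₗ[ℂ] ℂ := ExteriorAlgebra.liftAlternating Ffam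

theorem Fmap_ιMulti (w : Fin 4 → Wsp) :
    Fmap (ExteriorAlgebra.ιMulti ℂ 4 w) = A12 w := by
  rw [Fmap, ExteriorAlgebra.liftAlternating_apply_ιMulti]
  simp [Ffam]

theorem Fmap_prod (w0 w1 w2 w3 : Wsp) :
    Fmap (ExteriorAlgebra.ι ℂ w0 * ExteriorAlgebra.ι ℂ w1 * ExteriorAlgebra.ι ℂ w2 *
      ExteriorAlgebra.ι ℂ w3) = A12 ![w0, w1, w2, w3] := by
  rw [← Fmap_ιMulti, ExteriorAlgebra.ιMulti_apply]
  simp [List.ofFn_succ, mul_assoc]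

end MixedAux

section Comp
theorem detRow_eq (w : Fin 4 → Fin 4 → ℂ) :
    Matrix.detRowAlternating w = Matrix.det (Matrix.of w) := rfl

theorem det4 (a0 a1 a2 a3 b0 b1 b2 b3 : ℂ) :
    Matrix.det !![a0,a1,0,0;0,0,a2,a3;b0,b1,0,0;0,0,b2,b3] =
      -((a0*b1-a1*b0)*(a2*b3-a3*b2)) := by
  have hsa : (1 : Fin 4).succAbove 2 = 3 := rfl
  simp [Matrix.det_succ_row_zero, Fin.sum_univ_succ, hsa]
  ring

theorem A12_gen (a b : Fin 4 → ℝ) :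
    A12 ![((fun i => (a i : ℂ)), 0), (0, fun i => (a i : ℂ)),
          ((fun i => (b i : ℂ)), 0), (0, fun i => (b i : ℂ))] = 0 := by
  rw [A12_apply]
  have h1 : (Matrix.of fun i => g1 (![((fun i => (a i : ℂ)), 0), (0, fun i => (a i : ℂ)),
          ((fun i => (b i : ℂ)), 0), (0, fun i => (b i : ℂ))] i)) =
      !![(a 0 : ℂ), a 1, 0, 0; 0, 0, a 2, a 3; b 0, b 1, 0, 0; 0, 0, b 2, b 3] := by
    ext i j
    fin_cases i <;> fin_cases j <;> simp [g1]
  have h2 : (Matrix.of fun i => g2 (![((fun i => (a i : ℂ)), 0), (0, fun i => (a i : ℂ)),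
          ((fun i => (b i : ℂ)), 0), (0, fun i => (b i : ℂ))] i)) =
      !![(a 2 : ℂ), a 3, 0, 0; 0, 0, a 0, a 1; b 2, b 3, 0, 0; 0, 0, b 0, b 1] := by
    ext i j
    fin_cases i <;> fin_cases j <;> simp [g2]
  rw [h1, h2, det4, det4]
  ring

theorem A12_target :
    A12 ![((Pi.single 0 1 : Fin 4 → ℂ), 0), ((Pi.single 1 1 : Fin 4 → ℂ), 0),
          (0, (Pi.single 2 1 : Fin 4 → ℂ)), (0, (Pi.single 3 1 : Fin 4 → ℂ))] = 1 := by
  rw [A12_apply]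
  have h1 : (Matrix.of fun i => g1 (![((Pi.single 0 1 : Fin 4 → ℂ), 0),
        ((Pi.single 1 1 : Fin 4 → ℂ), 0), (0, (Pi.single 2 1 : Fin 4 → ℂ)),
        (0, (Pi.single 3 1 : Fin 4 → ℂ))] i)) = (1 : Matrix (Fin 4) (Fin 4) ℂ) := by
    ext i j
    fin_cases i <;> fin_cases j <;> simp [g1, Pi.single_apply, Matrix.one_apply]
  have h2 : (Matrix.of fun i => g2 (![((Pi.single 0 1 : Fin 4 → ℂ), 0),
        ((Pi.single 1 1 : Fin 4 → ℂ), 0), (0, (Pi.single 2 1 : Fin 4 → ℂ)),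
        (0, (Pi.single 3 1 : Fin 4 → ℂ))] i)) = (0 : Matrix (Fin 4) (Fin 4) ℂ) := by
    ext i j
    fin_cases i <;> fin_cases j <;>
      simp [g2, Pi.single_apply, Matrix.vecHead, Matrix.vecTail]
  rw [h1, h2, Matrix.det_zero, Matrix.det_one]
  ring
end Comp

theorem sum_vec (a : Fin 4 → ℝ) :
    (∑ i, (a i : ℂ) • ((Pi.single i 1, 0) : Wsp)) = ((fun i => (a i : ℂ)), 0) := by
  rw [Prod.ext_iff]
  constructor
  · rw [Prod.fst_sum]
    funext j
    simp [Finset.sum_apply, Pi.single_apply]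
  · rw [Prod.snd_sum]
    simp

theorem sum_vec' (a : Fin 4 → ℝ) :
    (∑ i, (a i : ℂ) • ((0, Pi.single i 1) : Wsp)) = (0, fun i => (a i : ℂ)) := by
  rw [Prod.ext_iff]
  constructor
  · rw [Prod.fst_sum]; simp
  · rw [Prod.snd_sum]
    funext j
    simp [Finset.sum_apply, Pi.single_apply]





open ExteriorAlgebra in
/-- In the exterior algebra `Λ` of `W = (Fin 4 → ℂ) × (Fin 4 → ℂ)` over `ℂ`, with
`uᵢ = ι (eᵢ, 0)` and `vᵢ = ι (0, eᵢ)`, the element `u₀ ∧ u₁ ∧ v₂ ∧ v₃` does not lie in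
the `ℚ`-linear span of the set of all elements
`(Σᵢ aᵢ uᵢ) ∧ (Σᵢ aᵢ vᵢ) ∧ (Σⱼ bⱼ uⱼ) ∧ (Σⱼ bⱼ vⱼ)` with `a, b : Fin 4 → ℝ`. -/
theorem mixed_form_not_in_rat_span_of_paired_forms
    (u v : Fin 4 → ExteriorAlgebra ℂ ((Fin 4 → ℂ) × (Fin 4 → ℂ)))
    (hu : ∀ i, u i = ι ℂ ((Pi.single i 1, 0) : (Fin 4 → ℂ) × (Fin 4 → ℂ)))
    (hv : ∀ i, v i = ι ℂ ((0, Pi.single i 1) : (Fin 4 → ℂ) × (Fin 4 → ℂ))) :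
    u 0 * u 1 * v 2 * v 3 ∉
      Submodule.span ℚ
        {x : ExteriorAlgebra ℂ ((Fin 4 → ℂ) × (Fin 4 → ℂ)) |
          ∃ a b : Fin 4 → ℝ,
            x = (∑ i, (a i : ℂ) • u i) * (∑ i, (a i : ℂ) • v i) *
                  (∑ j, (b j : ℂ) • u j) * (∑ j, (b j : ℂ) • v j)} := by
  intro hmem
  have hgen : ∀ x ∈ {x : ExteriorAlgebra ℂ Wsp |
      ∃ a b : Fin 4 → ℝ,
        x = (∑ i, (a i : ℂ) • u i) * (∑ i, (a i : ℂ) • v i) *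
              (∑ j, (b j : ℂ) • u j) * (∑ j, (b j : ℂ) • v j)}, Fmap x = 0 := by
    rintro x ⟨a, b, rfl⟩
    have e1 : (∑ i, (a i : ℂ) • u i) = ι ℂ (((fun i => (a i : ℂ)), 0) : Wsp) := by
      simp only [hu, ← map_smul, ← map_sum, sum_vec]
    have e2 : (∑ i, (a i : ℂ) • v i) = ι ℂ ((0, (fun i => (a i : ℂ))) : Wsp) := by
      simp only [hv, ← map_smul, ← map_sum, sum_vec']
    have e3 : (∑ j, (b j : ℂ) • u j) = ι ℂ (((fun j => (b j : ℂ)), 0) : Wsp) := by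
      simp only [hu, ← map_smul, ← map_sum, sum_vec]
    have e4 : (∑ j, (b j : ℂ) • v j) = ι ℂ ((0, (fun j => (b j : ℂ))) : Wsp) := by
      simp only [hv, ← map_smul, ← map_sum, sum_vec']
    rw [e1, e2, e3, e4, Fmap_prod]
    exact A12_gen a b
  have hspan : ∀ x ∈ Submodule.span ℚ {x : ExteriorAlgebra ℂ Wsp |
      ∃ a b : Fin 4 → ℝ,
        x = (∑ i, (a i : ℂ) • u i) * (∑ i, (a i : ℂ) • v i) *
              (∑ j, (b j : ℂ) • u j) * (∑ j, (b j : ℂ) • v j)}, Fmap x = 0 := by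
    intro x hx
    induction hx using Submodule.span_induction with
    | mem y hy => exact hgen y hy
    | zero => simp
    | add y z _ _ hy hz => rw [map_add, hy, hz, add_zero]
    | smul q y _ hy =>
        have h : Fmap (q • y) = q • Fmap y := map_rat_smul Fmap.toAddMonoidHom q y
        rw [h, hy, smul_zero]
  have hval : Fmap (u 0 * u 1 * v 2 * v 3) = 1 := by
    rw [hu 0, hu 1, hv 2, hv 3, Fmap_prod]
    exact A12_target
  have := hspan _ hmem
  rw [hval] at this
  exact one_ne_zero this
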